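/- Let Λ be the Lobachevsky function, and for n ≥ 5 set θ_n = π/2 − arccos(1/(2·cos(π/n))) and vol(L(n)) = (n/2)·(2Λ(θ_n) + Λ(θ_n + π/n) + Λ(θ_n − π/n) − Λ(2θ_n − π/2)). Then for every fixed natural number k ≥ 1, the sequence n ↦ (k·vol(L(n)))/(2n·(k+1)) converges to (k/(k+1))·(5/4)·Λ(π/6) as n → ∞; that is, the normalized volume of the tower L_k(n) of k Löbell polyhedra, which has volume k·vol(L(n)) and 2n(k+1) vertices, tends to (k/(k+1))·(5/8)·v_tet. -/

import Mathlib

open Real Filter MeasureTheory Set intervalIntegral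

/-- The Lobachevsky function `Λ(θ) = −∫₀^θ log|2 sin t| dt`. -/
noncomputable def lobachevsky (θ : ℝ) : ℝ :=
  -∫ t in (0:ℝ)..θ, Real.log |2 * Real.sin t|

/-- The angle parameter `θ_n = π/2 − arccos(1/(2cos(π/n)))` of the Löbell
polyhedron `L(n)`. -/
noncomputable def lobellAngle (n : ℕ) : ℝ :=
  π / 2 - Real.arccos (1 / (2 * Real.cos (π / (n : ℝ))))

/-- The volume of the right-angled hyperbolic Löbell polyhedron `L(n)`,
formula (5) of the paper. -/
noncomputable def lobellVolume (n : ℕ) : ℝ :=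
  ((n : ℝ) / 2) * (2 * lobachevsky (lobellAngle n)
    + lobachevsky (lobellAngle n + π / (n : ℝ))
    + lobachevsky (lobellAngle n - π / (n : ℝ))
    - lobachevsky (2 * lobellAngle n - π / 2))

namespace LobellAux

noncomputable def f : ℝ → ℝ := fun t => Real.log |2 * Real.sin t|

lemma f_measurable : Measurable f :=
  Real.measurable_log.comp ((continuous_abs.comp
    (continuous_const.mul Real.continuous_sin)).measurable)

lemma f_even (t : ℝ) : f (-t) = f t := by
  simp [f, Real.sin_neg, mul_neg, abs_neg]

/-- `log` is interval integrable on `[0,1]`. -/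
lemma intervalIntegrable_log01 : IntervalIntegrable Real.log volume 0 1 := by
  rw [intervalIntegrable_iff, uIoc_of_le (by norm_num : (0:ℝ) ≤ 1)]
  have h : IntegrableOn (fun x : ℝ => -Real.log x) (Ioc 0 1) volume := by
    apply intervalIntegral.integrableOn_deriv_of_nonneg
      (g := fun x : ℝ => x - x * Real.log x)
    · exact (continuous_id.sub Real.continuous_mul_log).continuousOn
    · intro x hx
      have := (Real.hasDerivAt_mul_log (ne_of_gt hx.1))
      exact ((hasDerivAt_id' x).sub this).congr_deriv (by ring)
    · intro x hx
      have : Real.log x ≤ 0 := Real.log_nonpos hx.1.le hx.2.le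
      linarith
  have h2 := h.neg
  simp only [Pi.neg_def, neg_neg] at h2
  exact h2

lemma f_bound {t : ℝ} (ht : t ∈ Ioc (0:ℝ) 1) :
    |f t| ≤ |Real.log t| + 1 := by
  obtain ⟨ht0, ht1⟩ := ht
  have hs0 : (3/4 : ℝ) * t ≤ Real.sin t := by
    have := Real.sin_gt_sub_cube ht0
    nlinarith [pow_le_pow_left₀ ht0.le ht1 3, sq_nonneg t, ht0.le]
  have hs1 : Real.sin t ≤ t := (Real.sin_lt ht0).le
  have hspos : 0 < Real.sin t := lt_of_lt_of_le (by positivity) hs0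
  have habs : |2 * Real.sin t| = 2 * Real.sin t := abs_of_pos (by positivity)
  have hlog1 : Real.log (2 * Real.sin t) ≤ Real.log (2 * t) :=
    Real.log_le_log (by positivity) (by linarith)
  have hlog2 : Real.log (2 * (3/4) * t) ≤ Real.log (2 * Real.sin t) :=
    Real.log_le_log (by positivity) (by linarith)
  rw [f, habs]
  rw [Real.log_mul (by norm_num) (ne_of_gt ht0)] at hlog1
  have e2 : Real.log (2 * (3/4) * t) = Real.log (3/2) + Real.log t := by
    rw [show (2 * (3/4) : ℝ) * t = (3/2) * t by ring,
      Real.log_mul (by norm_num) (ne_of_gt ht0)]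
  rw [e2] at hlog2
  have hl2 : Real.log 2 ≤ 1 := by
    have := Real.log_le_sub_one_of_pos (by norm_num : (0:ℝ) < 2); linarith
  have hl32 : (0:ℝ) ≤ Real.log (3/2) := Real.log_nonneg (by norm_num)
  have hlt : Real.log t ≤ 0 := Real.log_nonpos ht0.le ht1
  rw [abs_le]
  constructor
  · have : -|Real.log t| ≤ Real.log t := neg_abs_le _
    nlinarith [abs_nonneg (Real.log t)]
  · have : Real.log t ≤ |Real.log t| := le_abs_self _
    nlinarith

/-- `f` is interval integrable on `[0,b]` for `b ∈ [0,1]`. -/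
lemma f_intervalIntegrable_nonneg {b : ℝ} (hb0 : 0 ≤ b) (hb1 : b ≤ 1) :
    IntervalIntegrable f volume 0 b := by
  rw [intervalIntegrable_iff, uIoc_of_le hb0]
  have hsub : Ioc (0:ℝ) b ⊆ Ioc 0 1 := Ioc_subset_Ioc le_rfl hb1
  have hg : IntegrableOn (fun t : ℝ => |Real.log t| + 1) (Ioc 0 b) volume := by
    apply MeasureTheory.Integrable.add
    · have : IntegrableOn Real.log (Ioc (0:ℝ) 1) volume := by
        have := intervalIntegrable_log01
        rwa [intervalIntegrable_iff, uIoc_of_le (by norm_num : (0:ℝ) ≤ 1)] at this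
      exact (this.mono_set hsub).abs
    · refine (MeasureTheory.integrableOn_const_iff (C := (1:ℝ))).mpr (Or.inr ?_)
      exact measure_Ioc_lt_top
  refine Integrable.mono hg (f_measurable.aestronglyMeasurable.restrict) ?_
  refine (ae_restrict_iff' measurableSet_Ioc).2 (Filter.Eventually.of_forall ?_)
  intro t ht
  have := f_bound (hsub ht)
  rw [Real.norm_eq_abs, Real.norm_eq_abs]
  calc |f t| ≤ |Real.log t| + 1 := this
    _ ≤ |(|Real.log t| + 1)| := le_abs_self _

/-- `f` is interval integrable on `[0,b]` for `|b| ≤ 1`. -/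
lemma f_intervalIntegrable {b : ℝ} (hb : |b| ≤ 1) :
    IntervalIntegrable f volume 0 b := by
  rcases le_total 0 b with hb0 | hb0
  · exact f_intervalIntegrable_nonneg hb0 (by rwa [abs_of_nonneg hb0] at hb)
  · have h : IntervalIntegrable f volume 0 (-b) :=
      f_intervalIntegrable_nonneg (by linarith)
        (by rwa [abs_of_nonpos hb0] at hb)
    have h2 : IntervalIntegrable (fun x => f (-x)) volume (-0) (-(-b)) :=
      ((IntervalIntegrable.iff_comp_neg (f := f) (a := 0) (b := -b)).mp h)
    simp only [neg_zero, neg_neg] at h2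
    exact h2.congr (fun x _ => f_even x)

lemma lobachevsky_continuousAt {a : ℝ} (ha : |a| ≤ 1) (hsa : Real.sin a ≠ 0) :
    ContinuousAt lobachevsky a := by
  have hint : IntervalIntegrable f volume 0 a := f_intervalIntegrable ha
  have hca : ContinuousAt f a := by
    have h2 : (2 : ℝ) * Real.sin a ≠ 0 := by
      simpa using hsa
    exact (Real.continuousAt_log (by simpa using h2)).comp
      ((continuous_abs.comp (continuous_const.mul Real.continuous_sin)).continuousAt)
  have hd := intervalIntegral.integral_hasDerivAt_right hint
    (f_measurable.stronglyMeasurable.stronglyMeasurableAtFilter) hca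
  exact (hd.continuousAt).neg

lemma lobachevsky_neg_pi_div_six :
    lobachevsky (-(π/6)) = -lobachevsky (π/6) := by
  unfold lobachevsky
  have h := intervalIntegral.integral_comp_neg (a := (0:ℝ)) (b := π/6) f
  simp only [neg_zero] at h
  have h2 : (∫ t in (0:ℝ)..(π/6), f (-t)) = ∫ t in (0:ℝ)..(π/6), f t := by
    apply intervalIntegral.integral_congr; intro t _; exact f_even t
  have h3 : (∫ t in (-(π/6))..(0:ℝ), f t) = -∫ t in (0:ℝ)..(-(π/6)), f t :=
    intervalIntegral.integral_symm _ _
  show -∫ t in (0:ℝ)..(-(π/6)), f t = -(-∫ t in (0:ℝ)..(π/6), f t)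
  linarith [h, h2, h3]

lemma lobellAngle_tendsto :
    Tendsto (fun n : ℕ => lobellAngle n) atTop (nhds (π/6)) := by
  have h0 : Tendsto (fun n : ℕ => π / (n : ℝ)) atTop (nhds 0) :=
    tendsto_const_nhds.div_atTop tendsto_natCast_atTop_atTop
  have hc : Tendsto (fun n : ℕ => Real.cos (π / (n : ℝ))) atTop (nhds 1) := by
    have := (Real.continuous_cos.continuousAt (x := (0:ℝ))).tendsto.comp h0
    simpa [Function.comp_def] using this
  have hq : Tendsto (fun n : ℕ => 1 / (2 * Real.cos (π / (n : ℝ)))) atTop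
      (nhds (1/2)) := by
    have h2 : Tendsto (fun n : ℕ => 2 * Real.cos (π / (n : ℝ))) atTop (nhds 2) := by
      simpa using hc.const_mul 2
    exact (tendsto_const_nhds (x := (1:ℝ))).div h2 (by norm_num)
  have harc : Tendsto (fun n : ℕ =>
      Real.arccos (1 / (2 * Real.cos (π / (n : ℝ))))) atTop (nhds (π/3)) := by
    have hval : Real.arccos (1/2) = π/3 := by
      rw [show (1/2 : ℝ) = Real.cos (π/3) by rw [Real.cos_pi_div_three]]
      exact Real.arccos_cos (by positivity) (by linarith [Real.pi_pos])
    have := (Real.continuous_arccos.continuousAt (x := (1/2:ℝ))).tendsto.comp hq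
    rwa [hval] at this
  have : Tendsto (fun n : ℕ => π / 2 -
      Real.arccos (1 / (2 * Real.cos (π / (n : ℝ))))) atTop (nhds (π/2 - π/3)) :=
    tendsto_const_nhds.sub harc
  simpa [lobellAngle, show π/2 - π/3 = π/6 by ring] using this

end LobellAux

open LobellAux in
/-- Formula (6): for fixed `k ≥ 1`, the normalized volume of the tower
`L_k(n)` (volume `k·vol(L(n))`, `2n(k+1)` vertices) tends to
`(k/(k+1))·(5/8)·v_tet = (k/(k+1))·(5/4)·Λ(π/6)` as `n → ∞`. -/
theorem lobell_tower_normalized_volume_tendsto (k : ℕ) (hk : 1 ≤ k) :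
    Tendsto (fun n : ℕ =>
        ((k : ℝ) * lobellVolume n) / (2 * (n : ℝ) * ((k : ℝ) + 1)))
      atTop
      (nhds (((k : ℝ) / ((k : ℝ) + 1)) * (5 / 4) * lobachevsky (π / 6))) := by
  have hθ := lobellAngle_tendsto
  have hpin : Tendsto (fun n : ℕ => π / (n : ℝ)) atTop (nhds 0) :=
    tendsto_const_nhds.div_atTop tendsto_natCast_atTop_atTop
  have hsin6 : Real.sin (π/6) ≠ 0 := by
    rw [Real.sin_pi_div_six]; norm_num
  have hc1 : ContinuousAt lobachevsky (π/6) := by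
    apply lobachevsky_continuousAt _ hsin6
    rw [abs_of_pos (by positivity)]
    linarith [Real.pi_lt_d2]
  have hc2 : ContinuousAt lobachevsky (-(π/6)) := by
    apply lobachevsky_continuousAt
    · rw [abs_neg, abs_of_pos (by positivity)]; linarith [Real.pi_lt_d2]
    · rw [Real.sin_neg, Real.sin_pi_div_six]; norm_num
  -- limits of the four Lobachevsky terms
  have t1 : Tendsto (fun n : ℕ => lobachevsky (lobellAngle n)) atTop
      (nhds (lobachevsky (π/6))) := hc1.tendsto.comp hθ
  have t2 : Tendsto (fun n : ℕ => lobachevsky (lobellAngle n + π / (n:ℝ))) atTop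
      (nhds (lobachevsky (π/6))) := by
    have : Tendsto (fun n : ℕ => lobellAngle n + π / (n:ℝ)) atTop (nhds (π/6)) := by
      simpa using hθ.add hpin
    exact hc1.tendsto.comp this
  have t3 : Tendsto (fun n : ℕ => lobachevsky (lobellAngle n - π / (n:ℝ))) atTop
      (nhds (lobachevsky (π/6))) := by
    have : Tendsto (fun n : ℕ => lobellAngle n - π / (n:ℝ)) atTop (nhds (π/6)) := by
      simpa using hθ.sub hpin
    exact hc1.tendsto.comp this
  have t4 : Tendsto (fun n : ℕ => lobachevsky (2 * lobellAngle n - π/2)) atTop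
      (nhds (-lobachevsky (π/6))) := by
    have h : Tendsto (fun n : ℕ => 2 * lobellAngle n - π/2) atTop
        (nhds (-(π/6))) := by
      have := (hθ.const_mul 2).sub (tendsto_const_nhds (x := π/2))
      simpa [show 2 * (π/6) - π/2 = -(π/6) by ring] using this
    have := hc2.tendsto.comp h
    rwa [lobachevsky_neg_pi_div_six] at this
  -- the bracket tends to 5Λ(π/6)
  have tB : Tendsto (fun n : ℕ => 2 * lobachevsky (lobellAngle n)
      + lobachevsky (lobellAngle n + π / (n:ℝ))
      + lobachevsky (lobellAngle n - π / (n:ℝ))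
      - lobachevsky (2 * lobellAngle n - π/2)) atTop
      (nhds (5 * lobachevsky (π/6))) := by
    have := (((t1.const_mul 2).add t2).add t3).sub t4
    have e : 2 * lobachevsky (π/6) + lobachevsky (π/6) + lobachevsky (π/6)
        - (-lobachevsky (π/6)) = 5 * lobachevsky (π/6) := by ring
    rwa [e] at this
  have tFinal := tB.const_mul (((k:ℝ) / ((k:ℝ)+1)) * (1/4))
  have hlim : ((k:ℝ) / ((k:ℝ)+1)) * (1/4) * (5 * lobachevsky (π/6))
      = ((k:ℝ) / ((k:ℝ)+1)) * (5/4) * lobachevsky (π/6) := by ring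
  rw [hlim] at tFinal
  refine tFinal.congr' ?_
  filter_upwards [eventually_ge_atTop 1] with n hn
  have hn0 : (n : ℝ) ≠ 0 := Nat.cast_ne_zero.2 (by omega)
  have hk0 : (k : ℝ) + 1 ≠ 0 := by positivity
  unfold lobellVolume
  field_simp
  ring
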